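/- Let p be an odd prime and t an integer. Then p divides 1 − t^p − (1 − t)^p, and the residue class of the integer (1 − t^p − (1 − t)^p)/p modulo p equals γ_p(t mod p) in 𝔽_p. -/

import Mathlib

def mirimanoff (p : ℕ) (t : ZMod p) : ZMod p :=
  ∑ j ∈ Finset.Icc 1 (p - 1), (j : ZMod p)⁻¹ * t ^ j

lemma choose_sub_one_cast (p : ℕ) (hp : p.Prime) :
    ∀ k, k ≤ p - 1 → (((p - 1).choose k : ℕ) : ZMod p) = (-1) ^ k := by
  intro k
  induction k with
  | zero => simp
  | succ k ih =>
    intro hk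
    have hk' : k ≤ p - 1 := Nat.le_of_succ_le hk
    have hpascal : (p - 1).choose k + (p - 1).choose (k + 1) = p.choose (k + 1) := by
      have h1 : p - 1 + 1 = p := Nat.succ_pred_eq_of_pos hp.pos
      rw [← h1, Nat.choose_succ_succ]
      simp
    have hdvd : (p : ℕ) ∣ p.choose (k + 1) := by
      refine hp.dvd_choose_self (Nat.succ_ne_zero k) ?_
      omega
    have hc : ((p.choose (k + 1) : ℕ) : ZMod p) = 0 := by
      exact_mod_cast (ZMod.natCast_eq_zero_iff _ _).2 hdvd
    have := congrArg (fun n : ℕ => (n : ZMod p)) hpascal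
    simp only [Nat.cast_add, hc] at this
    have h2 : (((p - 1).choose (k + 1) : ℕ) : ZMod p) = -(((p - 1).choose k : ℕ) : ZMod p) := by
      linear_combination this
    rw [h2, ih hk', pow_succ]
    ring

lemma choose_div_p_cast (p : ℕ) (hp : p.Prime) (k : ℕ) (h0 : 0 < k) (hkp : k < p) :
    ((p.choose k / p : ℕ) : ZMod p) = (-1) ^ (k - 1) * (k : ZMod p)⁻¹ := by
  have hdvd : p ∣ p.choose k := hp.dvd_choose_self h0.ne' hkp
  have hid : p * (p - 1).choose (k - 1) = p.choose k * k := by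
    have h1 : p - 1 + 1 = p := Nat.succ_pred_eq_of_pos hp.pos
    have h2 : k - 1 + 1 = k := Nat.succ_pred_eq_of_pos h0
    calc p * (p - 1).choose (k - 1) = (p - 1 + 1) * (p - 1).choose (k - 1) := by rw [h1]
      _ = (p - 1 + 1).choose (k - 1 + 1) * (k - 1 + 1) := Nat.add_one_mul_choose_eq _ _
      _ = p.choose k * k := by rw [h1, h2]
  have hkey : k * (p.choose k / p) = (p - 1).choose (k - 1) := by
    have := Nat.mul_div_cancel_left ((p - 1).choose (k - 1)) hp.pos
    rw [hid] at this
    rw [← this, Nat.mul_comm (p.choose k) k, Nat.mul_div_assoc k hdvd]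
  have hcast := congrArg (fun n : ℕ => (n : ZMod p)) hkey
  simp only [Nat.cast_mul] at hcast
  rw [choose_sub_one_cast p hp (k - 1) (by omega)] at hcast
  have hku : (k : ZMod p) ≠ 0 := by
    haveI : Fact p.Prime := ⟨hp⟩
    rw [Ne, ZMod.natCast_eq_zero_iff]
    exact fun hd => absurd (Nat.le_of_dvd h0 hd) (not_le.2 hkp)
  haveI : Fact p.Prime := ⟨hp⟩
  rw [← inv_mul_cancel_left₀ hku (((p.choose k / p : ℕ) : ZMod p)), hcast]
  ring

theorem mirimanoff_eq_binomial_quotient (p : ℕ) (hp : p.Prime) (hodd : Odd p) (t : ℤ) :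
    (p : ℤ) ∣ (1 - t ^ p - (1 - t) ^ p) ∧
    (((1 - t ^ p - (1 - t) ^ p) / p : ℤ) : ZMod p) = mirimanoff p (t : ZMod p) := by
  have hexp := add_pow_prime_eq hp (-t) (1 : ℤ)
  have hneg : (-t) ^ p = -(t ^ p) := hodd.neg_pow t
  set S : ℤ := ∑ k ∈ Finset.Ioo 0 p, (-t) ^ k * 1 ^ (p - k) * ((p.choose k / p : ℕ) : ℤ) with hS
  have hmain : 1 - t ^ p - (1 - t) ^ p = p * (-S) := by
    have : (1 - t) ^ p = (-t + 1) ^ p := by ring_nf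
    have hsum : -t * ∑ k ∈ Finset.Ioo 0 p, (-t) ^ (k - 1) * 1 ^ (p - k - 1) *
        ((p.choose k / p : ℕ) : ℤ) = S := by
      rw [hS, Finset.mul_sum]
      apply Finset.sum_congr rfl
      intro k hk
      obtain ⟨j, rfl⟩ : ∃ j, k = j + 1 := ⟨k - 1, by have := (Finset.mem_Ioo.1 hk).1; omega⟩
      simp only [Nat.add_sub_cancel, one_pow]
      ring
    rw [this, hexp, hneg]
    linear_combination (-(p : ℤ)) * hsum
  constructor
  · exact ⟨-S, hmain⟩
  · rw [hmain, Int.mul_ediv_cancel_left _ (by exact_mod_cast hp.pos.ne')]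
    haveI : Fact p.Prime := ⟨hp⟩
    rw [hS]
    simp only [Int.cast_neg, Int.cast_sum, Int.cast_mul, Int.cast_pow, Int.cast_natCast,
      Int.cast_one]
    have hIcc : Finset.Ioo 0 p = Finset.Icc 1 (p - 1) := by
      ext x
      simp only [Finset.mem_Ioo, Finset.mem_Icc]
      omega
    rw [hIcc, mirimanoff, ← Finset.sum_neg_distrib]
    apply Finset.sum_congr rfl
    intro k hk
    simp only [Finset.mem_Icc] at hk
    have hk0 : 0 < k := hk.1
    have hkp : k < p := by omega
    rw [choose_div_p_cast p hp k hk0 hkp, neg_pow, one_pow, mul_one]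
    have hsplit : ((-1 : ZMod p)) ^ k = (-1) ^ (k - 1) * (-1) := by
      conv_lhs => rw [show k = (k - 1) + 1 by omega]
      rw [pow_succ]
    have hsq : ((-1 : ZMod p)) ^ (k - 1) * (-1) ^ (k - 1) = 1 := by
      rw [← pow_add, ← two_mul, pow_mul]
      simp
    rw [hsplit]
    linear_combination ((t : ZMod p)) ^ k * ((k : ZMod p))⁻¹ * hsq
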